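/- For every odd positive integer b, the inequality κ_b − 2·κ_{(b−1)/2} − (b − 1) ≥ 0 holds. -/
import Mathlib


open Finset Filter Topology

/-- The `n`-th harmonic number `H_n = ∑_{i=1}^n 1/i`. -/
noncomputable def H (n : ℕ) : ℝ := ∑ i ∈ Finset.range n, (1 : ℝ) / (i + 1)

/-- `κ_n = 2(n+1)H_n - 4n`, the mean number of key comparisons for QuickSort on `n` keys. -/
noncomputable def κ (n : ℕ) : ℝ := 2 * (n + 1) * H n - 4 * n

lemma H_succ (n : ℕ) : H (n + 1) = H n + 1 / (n + 1) := by
  simp [H, Finset.sum_range_succ]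

lemma H_key (m : ℕ) : 1 / 2 + 1 / (2 * ((m : ℝ) + 1)) ≤ H (2 * m + 1) - H m := by
  induction m with
  | zero => simp [H_succ, H]; norm_num
  | succ k ih =>
      have h1 : (2 : ℕ) * (k + 1) + 1 = (2 * k + 1) + 1 + 1 := by ring
      rw [h1, H_succ ((2*k+1)+1), H_succ (2*k+1), H_succ k]
      push_cast
      have hk : (0 : ℝ) < (k : ℝ) + 1 := by positivity
      have E1 : (1:ℝ)/((2*k:ℝ)+1+1) = 1/(2*((k:ℝ)+1)) := by ring_nf
      have E2 : (1:ℝ)/((k:ℝ)+1) - 1/(2*((k:ℝ)+1)) = 1/(2*((k:ℝ)+1)) := by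
        field_simp; ring
      have A : (1:ℝ)/(2*((k:ℝ)+1+1)) ≤ 1/((2*k:ℝ)+1+1+1) := by
        apply one_div_le_one_div_of_le <;> nlinarith
      linarith
 
theorem kappa_odd_inequality (b : ℕ) (hb : 0 < b) (hodd : Odd b) :
    0 ≤ κ b - 2 * κ ((b - 1) / 2) - ((b : ℝ) - 1) := by
  obtain ⟨m, hm⟩ := hodd
  subst hm
  have hdiv : (2 * m + 1 - 1) / 2 = m := by omega
  rw [hdiv]
  have key := H_key m
  have hk : (0 : ℝ) < (m : ℝ) + 1 := by positivity
  have expand : κ (2*m+1) - 2 * κ m - ((((2*m+1 : ℕ)) : ℝ) - 1)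
      = 4 * ((m:ℝ)+1) * (H (2*m+1) - H m) - 2*m - 4 := by
    simp only [κ]; push_cast; ring
  rw [expand]
  have h2 : 4 * ((m:ℝ)+1) * (1/2 + 1/(2*((m:ℝ)+1))) = 2*m + 4 := by
    field_simp; ring
  nlinarith [key, hk]
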